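/- Let m be a positive integer and let φ be a supermodular set function on subsets of {1,…,m}, i.e., φ(S ∪ T) + φ(S ∩ T) ≥ φ(S) + φ(T) for all S, T ⊆ {1,…,m}. For S ⊆ {1,…,m} and k ∉ S, define ρ(S, k) = φ(S ∪ {k}) − φ(S). Then for all S, T ⊆ {1,…,m}, φ(T) ≥ φ(S) − Σ_{k ∈ S \ T} [ φ({1,…,m}) − φ({1,…,m} \ {k}) ] + Σ_{k ∈ T \ S} [ φ(S ∪ {k}) − φ(S) ]. -/

import Mathlib

lemma marginal_mono {m : ℕ} (φ : Finset (Fin m) → ℝ)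
    (hsuper : ∀ S T : Finset (Fin m), φ S + φ T ≤ φ (S ∪ T) + φ (S ∩ T))
    {A B : Finset (Fin m)} (hAB : A ⊆ B) {k : Fin m} (hk : k ∉ B) :
    φ (insert k A) - φ A ≤ φ (insert k B) - φ B := by
  have h := hsuper (insert k A) B
  have hu : insert k A ∪ B = insert k B := by
    ext x
    have hx := @hAB x
    simp only [Finset.mem_union, Finset.mem_insert]
    tauto
  have hi : insert k A ∩ B = A := by
    ext x; simp [Finset.mem_insert, Finset.mem_inter]
    constructor
    · rintro ⟨h | h, hb⟩
      · exact absurd (h ▸ hb) hk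
      · exact h
    · intro h; exact ⟨Or.inr h, hAB h⟩
  rw [hu, hi] at h
  linarith

lemma add_marginals {m : ℕ} (φ : Finset (Fin m) → ℝ)
    (hsuper : ∀ S T : Finset (Fin m), φ S + φ T ≤ φ (S ∪ T) + φ (S ∩ T))
    (S : Finset (Fin m)) (D : Finset (Fin m)) (hD : Disjoint D S) :
    φ S + ∑ k ∈ D, (φ (insert k S) - φ S) ≤ φ (S ∪ D) := by
  induction D using Finset.induction_on with
  | empty => simp
  | @insert a D ha ih =>
    have hdisj := Finset.disjoint_insert_left.mp hD
    have ih' := ih hdisj.2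
    rw [Finset.sum_insert ha]
    have haSD : a ∉ S ∪ D := by simp [ha, hdisj.1]
    have := marginal_mono φ hsuper (Finset.subset_union_left (s₁ := S) (s₂ := D)) haSD
    have hu : insert a (S ∪ D) = S ∪ insert a D := (Finset.union_insert a S D).symm
    rw [hu] at this
    linarith

lemma remove_marginals {m : ℕ} (φ : Finset (Fin m) → ℝ)
    (hsuper : ∀ S T : Finset (Fin m), φ S + φ T ≤ φ (S ∪ T) + φ (S ∩ T))
    (D : Finset (Fin m)) : ∀ V : Finset (Fin m), D ⊆ V →
    φ V - ∑ k ∈ D, (φ Finset.univ - φ (Finset.univ.erase k)) ≤ φ (V \ D) := by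
  induction D using Finset.induction_on with
  | empty => simp
  | @insert a D ha ih =>
    intro V hV
    have haV : a ∈ V := hV (Finset.mem_insert_self a D)
    have hstep : φ V - φ (V.erase a) ≤ φ Finset.univ - φ (Finset.univ.erase a) := by
      have h1 : V.erase a ⊆ Finset.univ.erase a :=
        Finset.erase_subset_erase a (Finset.subset_univ V)
      have h2 : a ∉ Finset.univ.erase a := Finset.notMem_erase a _
      have := marginal_mono φ hsuper h1 h2
      rw [Finset.insert_erase haV, Finset.insert_erase (Finset.mem_univ a)] at this
      linarith
    have hDsub : D ⊆ V.erase a := by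
      intro x hx
      exact Finset.mem_erase.mpr ⟨fun h => ha (h ▸ hx), hV (Finset.mem_insert_of_mem hx)⟩
    have ih' := ih (V.erase a) hDsub
    have heq : V.erase a \ D = V \ insert a D := by
      ext x; simp [Finset.mem_erase, Finset.mem_sdiff, Finset.mem_insert]; tauto
    rw [heq] at ih'
    rw [Finset.sum_insert ha]
    linarith

theorem supermodular_cut_valid (m : ℕ) (hm : 1 ≤ m) (φ : Finset (Fin m) → ℝ)
    (hsuper : ∀ S T : Finset (Fin m), φ S + φ T ≤ φ (S ∪ T) + φ (S ∩ T)) :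
    ∀ S T : Finset (Fin m),
      φ S - (∑ k ∈ S \ T, (φ Finset.univ - φ (Finset.univ.erase k))) +
          (∑ k ∈ T \ S, (φ (insert k S) - φ S)) ≤ φ T := by
  intro S T
  have h1 := add_marginals φ hsuper S (T \ S) (Finset.sdiff_disjoint)
  have h2 := remove_marginals φ hsuper (S \ T) (S ∪ T)
    (Finset.sdiff_subset.trans Finset.subset_union_left)
  have he1 : S ∪ (T \ S) = S ∪ T := Finset.union_sdiff_self_eq_union
  have he2 : (S ∪ T) \ (S \ T) = T := by
    ext x; simp [Finset.mem_sdiff, Finset.mem_union]; tauto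
  rw [he1] at h1
  rw [he2] at h2
  linarith
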